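/- With Γ = RᵀΔR as above (c,s,τ > 0, c²-s²=1), Γ is not diagonalizable by an orthogonal symplectic matrix: there is no matrix A with AᵀA = I and AᵀJA = J such that AΓAᵀ is diagonal. (Since any OS-diagonalization would yield a diagonal matrix of the form ((1+2τ)(c+s)/(c-s), (1+2τ)(c-s)/(c+s), (c+s)/(c-s), (c-s)/(c+s)), which has at least three distinct entries, contradicting that Γ has only two distinct eigenvalues each with multiplicity 2.) -/

import Mathlib

open Matrix MeasureTheory Real BigOperators

/-- The standard symplectic form on `2*S` coordinates: block diagonal with
blocks `[[0,1],[-1,0]]`. -/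
noncomputable def Jmat (S : ℕ) : Matrix (Fin (2*S)) (Fin (2*S)) ℝ :=
  Matrix.of fun i j =>
    if i.val % 2 = 0 ∧ j.val = i.val + 1 then 1
    else if j.val % 2 = 0 ∧ i.val = j.val + 1 then -1 else 0

/-- A real `2S × 2S` matrix is symplectic if `Aᵀ J A = J`. -/
def IsSymplectic {S : ℕ} (A : Matrix (Fin (2*S)) (Fin (2*S)) ℝ) : Prop :=
  Aᵀ * Jmat S * A = Jmat S

/-- The thermal diagonal matrix `diag (ν₁, ν₁, …, ν_S, ν_S)`. -/
noncomputable def thermal {S : ℕ} (ν : Fin S → ℝ) :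
    Matrix (Fin (2*S)) (Fin (2*S)) ℝ :=
  Matrix.diagonal fun i => ν ⟨i.val / 2, by omega⟩

/-- The symmetric symplectic two-mode squeezing matrix `R`. -/
noncomputable def Rmat (c s : ℝ) : Matrix (Fin (2*2)) (Fin (2*2)) ℝ :=
  !![c, 0, s, 0; 0, c, 0, -s; s, 0, c, 0; 0, -s, 0, c]

/-- The thermal diagonal matrix `Δ = diag(1+2τ, 1+2τ, 1, 1)`. -/
noncomputable def Dmat (τ : ℝ) : Matrix (Fin (2*2)) (Fin (2*2)) ℝ :=
  !![1+2*τ, 0, 0, 0; 0, 1+2*τ, 0, 0; 0, 0, 1, 0; 0, 0, 0, 1]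

noncomputable def gplus (c s τ : ℝ) : ℝ :=
  (1+τ)*(c^2+s^2) + Real.sqrt (4*(1+τ)^2*c^2*s^2 + τ^2)

noncomputable def gminus (c s τ : ℝ) : ℝ :=
  (1+τ)*(c^2+s^2) - Real.sqrt (4*(1+τ)^2*c^2*s^2 + τ^2)

set_option maxHeartbeats 2000000 in
private lemma no_pair (p m N : ℝ) (hm : 0 < m) (hpm : m < p) (hN : p * m = N)
    (hN1 : 1 < N) (hS : N + 1 < p + m) (a b e d : ℝ)
    (ha : a = p ∨ a = m) (hb : b = p ∨ b = m) (he : e = p ∨ e = m)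
    (hd : d = p ∨ d = m)
    (hsum : a*b + e*d = N^2 + 1) (hprod : a*b*e*d = N^2) : False := by
  have hp : 0 < p := hm.trans hpm
  have h1 : 0 < p - m := sub_pos.2 hpm
  have h2 : 0 < p + m - (p*m + 1) := by nlinarith
  have h3 : 0 < (p+1)*(m+1) := by positivity
  rcases ha with ha|ha <;> rcases hb with hb|hb <;> rcases he with he|he <;>
    rcases hd with hd|hd <;> rw [ha, hb, he, hd] at hsum hprod <;>
    nlinarith [mul_pos h2 h3, mul_pos (mul_pos hp hp) (mul_pos hm h1),
      mul_pos (mul_pos hp hm) (mul_pos hm h1), mul_pos (mul_pos hp hp) (mul_pos hp h1),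
      mul_pos (mul_pos hm hm) (mul_pos hm h1), sq_nonneg (p*m - 1),
      mul_pos (mul_pos hp hm) (mul_pos hp h1), mul_pos hp hm, mul_pos hm hm, mul_pos hp hp]

private lemma conj_sq (A G : Matrix (Fin (2*2)) (Fin (2*2)) ℝ)
    (hATA : Aᵀ * A = 1) :
    (A * G * Aᵀ) * (A * G * Aᵀ) = A * (G * G) * Aᵀ := by
  calc (A * G * Aᵀ) * (A * G * Aᵀ) = A * (G * ((Aᵀ * A) * (G * Aᵀ))) := by
        simp only [Matrix.mul_assoc]
    _ = A * (G * G) * Aᵀ := by rw [hATA, Matrix.one_mul]; simp only [Matrix.mul_assoc]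

private lemma diag_quad (A G : Matrix (Fin (2*2)) (Fin (2*2)) ℝ) (f : Fin (2*2) → ℝ)
    (S P : ℝ) (hATA : Aᵀ * A = 1) (hAAT : A * Aᵀ = 1)
    (hdiag : A * G * Aᵀ = Matrix.diagonal f)
    (hquad : G * G - S • G + P • (1 : Matrix (Fin (2*2)) (Fin (2*2)) ℝ) = 0)
    (i : Fin (2*2)) : f i * f i - S * f i + P = 0 := by
  have hDD : Matrix.diagonal f * Matrix.diagonal f = A * (G * G) * Aᵀ := by
    rw [← hdiag]; exact conj_sq A G hATA
  have e1 : A * (G * G - S • G + P • (1 : Matrix (Fin (2*2)) (Fin (2*2)) ℝ)) * Aᵀ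
      = 0 := by rw [hquad, Matrix.mul_zero, Matrix.zero_mul]
  have e2 : A * (G * G - S • G + P • (1 : Matrix (Fin (2*2)) (Fin (2*2)) ℝ)) * Aᵀ
      = A * (G * G) * Aᵀ - S • (A * G * Aᵀ) + P • (A * Aᵀ) := by
    simp only [Matrix.mul_sub, Matrix.sub_mul, Matrix.mul_add, Matrix.add_mul,
      mul_smul_comm, smul_mul_assoc, Matrix.mul_one, Matrix.mul_assoc]
  rw [e2, hAAT, hdiag, ← hDD] at e1
  have h3 := congr_fun (congr_fun e1 i) i
  simpa [Matrix.diagonal_mul_diagonal, Matrix.sub_apply, Matrix.add_apply,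
    Matrix.smul_apply, Matrix.diagonal_apply_eq, Matrix.one_apply_eq,
    smul_eq_mul] using h3

private lemma trace_transfer (A G J : Matrix (Fin (2*2)) (Fin (2*2)) ℝ)
    (f : Fin (2*2) → ℝ) (hATA : Aᵀ * A = 1)
    (hJA : J * A = A * J) (hdiag : A * G * Aᵀ = Matrix.diagonal f) :
    Matrix.trace ((J * Matrix.diagonal f) * (J * Matrix.diagonal f))
      = Matrix.trace ((J * G) * (J * G)) := by
  have hJD : J * (A * G * Aᵀ) = A * (J * G) * Aᵀ := by
    calc J * (A * G * Aᵀ) = (J * A) * (G * Aᵀ) := by simp only [Matrix.mul_assoc]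
      _ = A * (J * G) * Aᵀ := by rw [hJA]; simp only [Matrix.mul_assoc]
  rw [← hdiag, hJD, conj_sq A (J * G) hATA]
  rw [Matrix.trace_mul_comm, ← Matrix.mul_assoc, ← Matrix.mul_assoc, hATA,
    Matrix.one_mul]

private lemma det_transfer (A G : Matrix (Fin (2*2)) (Fin (2*2)) ℝ)
    (f : Fin (2*2) → ℝ) (hATA : Aᵀ * A = 1)
    (hdiag : A * G * Aᵀ = Matrix.diagonal f) :
    (Matrix.diagonal f).det = G.det := by
  have hdA : Aᵀ.det * A.det = 1 := by rw [← Matrix.det_mul, hATA, Matrix.det_one]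
  rw [Matrix.det_transpose] at hdA
  rw [← hdiag, Matrix.det_mul, Matrix.det_mul, Matrix.det_transpose]
  linear_combination G.det * hdA

set_option maxHeartbeats 4000000

/-- with `Γ = Rᵀ Δ R` (`c, s, τ > 0`, `c² - s² = 1`), `Γ` is not
diagonalizable by any orthogonal symplectic matrix: there is no `A` with
`Aᵀ A = I` and `Aᵀ J A = J` such that `A Γ Aᵀ` is diagonal. -/
theorem not_OS_diagonalizable (c s τ : ℝ)
    (hc : 0 < c) (hs : 0 < s) (hτ : 0 < τ) (h : c^2 - s^2 = 1) :
    ¬ ∃ A : Matrix (Fin (2*2)) (Fin (2*2)) ℝ,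
        Aᵀ * A = 1 ∧ IsSymplectic A ∧
        ∃ f : Fin (2*2) → ℝ,
          A * ((Rmat c s)ᵀ * Dmat τ * Rmat c s) * Aᵀ = Matrix.diagonal f := by
  rintro ⟨A, hATA, hsymp, f, hdiag⟩
  have hAAT : A * Aᵀ = 1 := mul_eq_one_comm.mp hATA
  unfold IsSymplectic at hsymp
  have hJA : Jmat 2 * A = A * Jmat 2 := by
    calc Jmat 2 * A = (A * Aᵀ) * (Jmat 2 * A) := by rw [hAAT, Matrix.one_mul]
      _ = A * (Aᵀ * Jmat 2 * A) := by simp only [Matrix.mul_assoc]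
      _ = A * Jmat 2 := by rw [hsymp]
  have hG : (Rmat c s)ᵀ * Dmat τ * Rmat c s = !![(1+2*τ)*c^2+s^2, 0, (2+2*τ)*(c*s), 0;
       0, (1+2*τ)*c^2+s^2, 0, -((2+2*τ)*(c*s));
       (2+2*τ)*(c*s), 0, (1+2*τ)*s^2+c^2, 0;
       0, -((2+2*τ)*(c*s)), 0, (1+2*τ)*s^2+c^2] := by
    ext i j
    fin_cases i <;> fin_cases j <;>
      simp [Rmat, Dmat, Matrix.mul_apply, Fin.sum_univ_four, Matrix.vecHead,
        Matrix.vecTail] <;> ring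
  have hJ : Jmat 2 = !![0,1,0,0;-1,0,0,0;0,0,0,1;0,0,-1,0] := by
    ext i j
    fin_cases i <;> fin_cases j <;>
      norm_num [Jmat, Matrix.vecHead, Matrix.vecTail, Fin.ext_iff]
  have h1m : (1 : Matrix (Fin (2*2)) (Fin (2*2)) ℝ)
      = !![1,0,0,0;0,1,0,0;0,0,1,0;0,0,0,1] := by
    ext i j
    fin_cases i <;> fin_cases j <;>
      simp [Matrix.one_apply, Matrix.vecHead, Matrix.vecTail, Fin.ext_iff] <;> decide
  rw [hG] at hdiag
  have hquad : (!![(1+2*τ)*c^2+s^2, 0, (2+2*τ)*(c*s), 0;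
       0, (1+2*τ)*c^2+s^2, 0, -((2+2*τ)*(c*s));
       (2+2*τ)*(c*s), 0, (1+2*τ)*s^2+c^2, 0;
       0, -((2+2*τ)*(c*s)), 0, (1+2*τ)*s^2+c^2] : Matrix (Fin (2*2)) (Fin (2*2)) ℝ)
      * !![(1+2*τ)*c^2+s^2, 0, (2+2*τ)*(c*s), 0;
       0, (1+2*τ)*c^2+s^2, 0, -((2+2*τ)*(c*s));
       (2+2*τ)*(c*s), 0, (1+2*τ)*s^2+c^2, 0;
       0, -((2+2*τ)*(c*s)), 0, (1+2*τ)*s^2+c^2]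
      - (2*((1+τ)*(c^2+s^2))) • !![(1+2*τ)*c^2+s^2, 0, (2+2*τ)*(c*s), 0;
       0, (1+2*τ)*c^2+s^2, 0, -((2+2*τ)*(c*s));
       (2+2*τ)*(c*s), 0, (1+2*τ)*s^2+c^2, 0;
       0, -((2+2*τ)*(c*s)), 0, (1+2*τ)*s^2+c^2]
      + (1+2*τ) • (1 : Matrix (Fin (2*2)) (Fin (2*2)) ℝ) = 0 := by
    rw [h1m]
    ext i j
    fin_cases i <;> fin_cases j <;>
      simp [Matrix.mul_apply, Fin.sum_univ_four, Matrix.vecHead, Matrix.vecTail] <;>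
      (first
        | ring1
        | linear_combination (-((1+2*τ)*(c^2-s^2+1))) * h
        | linear_combination ((1+2*τ)*(c^2-s^2+1)) * h)
  have hq := fun i => diag_quad A _ f (2*((1+τ)*(c^2+s^2))) (1+2*τ) hATA hAAT hdiag hquad i
  have htr0 := trace_transfer A _ (Jmat 2) f hATA hJA hdiag
  have htrG : Matrix.trace ((Jmat 2 * !![(1+2*τ)*c^2+s^2, 0, (2+2*τ)*(c*s), 0;
       0, (1+2*τ)*c^2+s^2, 0, -((2+2*τ)*(c*s));
       (2+2*τ)*(c*s), 0, (1+2*τ)*s^2+c^2, 0;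
       0, -((2+2*τ)*(c*s)), 0, (1+2*τ)*s^2+c^2]) * (Jmat 2 * !![(1+2*τ)*c^2+s^2, 0, (2+2*τ)*(c*s), 0;
       0, (1+2*τ)*c^2+s^2, 0, -((2+2*τ)*(c*s));
       (2+2*τ)*(c*s), 0, (1+2*τ)*s^2+c^2, 0;
       0, -((2+2*τ)*(c*s)), 0, (1+2*τ)*s^2+c^2])) = -2*((1+2*τ)^2+1) := by
    rw [hJ]
    simp [Matrix.trace, Matrix.diag, Fin.sum_univ_four, Matrix.mul_apply,
      Matrix.vecHead, Matrix.vecTail]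
    first
      | linear_combination (-((4+8*τ+8*τ^2)*(c^2-s^2+1))) * h
      | linear_combination ((4+8*τ+8*τ^2)*(c^2-s^2+1)) * h
  have htrD : Matrix.trace ((Jmat 2 * Matrix.diagonal f) * (Jmat 2 * Matrix.diagonal f))
      = -2*(f 0 * f 1 + f 2 * f 3) := by
    rw [hJ]
    simp [Matrix.trace, Matrix.diag, Fin.sum_univ_four, Matrix.mul_apply,
      Matrix.diagonal, Matrix.vecHead, Matrix.vecTail, Fin.ext_iff,
      show ((3:Fin (2*2)) : ℕ) = 3 from rfl, show ((2:Fin (2*2)) : ℕ) = 2 from rfl,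
      show ((1:Fin (2*2)) : ℕ) = 1 from rfl, show ((0:Fin (2*2)) : ℕ) = 0 from rfl,
      show (Fin.succ 2 : Fin (2*2)) = 3 from rfl]
    ring
  have hsum : f 0 * f 1 + f 2 * f 3 = (1+2*τ)^2 + 1 := by
    rw [htrD, htrG] at htr0
    linarith
  have hdetG : (!![(1+2*τ)*c^2+s^2, 0, (2+2*τ)*(c*s), 0;
       0, (1+2*τ)*c^2+s^2, 0, -((2+2*τ)*(c*s));
       (2+2*τ)*(c*s), 0, (1+2*τ)*s^2+c^2, 0;
       0, -((2+2*τ)*(c*s)), 0, (1+2*τ)*s^2+c^2] : Matrix (Fin (2*2)) (Fin (2*2)) ℝ).det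
      = (1+2*τ)^2 := by
    rw [← hG]
    have hR : (Rmat c s).det = 1 := by
      simp [Rmat, Matrix.det_succ_row_zero, Fin.sum_univ_succ, Fin.succAbove,
        Matrix.vecHead, Matrix.vecTail]
      first
        | linear_combination (c^2 - s^2 + 1) * h
        | linear_combination (-(c^2 - s^2 + 1)) * h
    have hD : (Dmat τ).det = (1+2*τ)^2 := by
      simp [Dmat, Matrix.det_succ_row_zero, Fin.sum_univ_succ, Fin.succAbove,
        Matrix.vecHead, Matrix.vecTail]
      ring
    rw [Matrix.det_mul, Matrix.det_mul, Matrix.det_transpose, hR, hD]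
    ring
  have hprod : f 0 * f 1 * f 2 * f 3 = (1+2*τ)^2 := by
    have e := det_transfer A _ f hATA hdiag
    rw [hdetG, Matrix.det_diagonal, Fin.prod_univ_four] at e
    exact e
  set w : ℝ := Real.sqrt (4*(1+τ)^2*c^2*s^2 + τ^2) with hwdef
  have harg : (0:ℝ) < 4*(1+τ)^2*c^2*s^2 + τ^2 := by positivity
  have hw : 0 < w := Real.sqrt_pos.2 harg
  have hw2 : w^2 = 4*(1+τ)^2*c^2*s^2 + τ^2 := Real.sq_sqrt harg.le
  have hMw : ((1+τ)*(c^2+s^2))^2 - w^2 = 1+2*τ := by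
    rw [hw2]
    first
      | linear_combination ((1+τ)^2*(c^2-s^2+1)) * h
      | linear_combination (-((1+τ)^2*(c^2-s^2+1))) * h
  have hM0 : 0 < (1+τ)*(c^2+s^2) := by positivity
  have hwM : w < (1+τ)*(c^2+s^2) := by nlinarith [hMw, hw, hM0, hτ]
  have hroot : ∀ i : Fin (2*2),
      f i = (1+τ)*(c^2+s^2) + w ∨ f i = (1+τ)*(c^2+s^2) - w := by
    intro i
    have h3 := hq i
    have h4 : (f i - ((1+τ)*(c^2+s^2)+w)) * (f i - ((1+τ)*(c^2+s^2)-w)) = 0 := by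
      linear_combination h3 + hMw
    rcases mul_eq_zero.1 h4 with h5 | h5
    · exact Or.inl (by linarith [sub_eq_zero.1 h5])
    · exact Or.inr (by linarith [sub_eq_zero.1 h5])
  exact no_pair ((1+τ)*(c^2+s^2)+w) ((1+τ)*(c^2+s^2)-w) (1+2*τ) (by linarith)
    (by linarith) (by linear_combination hMw) (by linarith)
    (by nlinarith [mul_pos hs hs, mul_pos hτ (mul_pos hs hs)])
    (f 0) (f 1) (f 2) (f 3) (hroot 0) (hroot 1) (hroot 2) (hroot 3) hsum hprod
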